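/- arXiv:2006.12489 — 4 statements merged into one kernel-verified Lean document; each statement's English description precedes it below -/
import Mathlib

section
/- Let Q : (0,∞) → (0,∞) be measurable such that g(t) := lim_{x→∞} Q(tx)/Q(x) exists, is finite and nonzero for all t > 0. Then there exists γ ∈ ℝ such that g(t) = t^γ for all t > 0. -/
open Filter

section Aux

open MeasureTheory Measure Set Pointwise

/-- A measurable additive function `ℝ → ℝ` is bounded near `0`. -/
lemma aux_bounded_near_zero (f : ℝ → ℝ) (hf : Measurable f)
    (hadd : ∀ x y, f (x + y) = f x + f y) :
    ∃ (C δ : ℝ), 0 < δ ∧ ∀ z : ℝ, |z| < δ → |f z| ≤ C := by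
  set A : ℕ → Set ℝ := fun n => Icc (0 : ℝ) 1 ∩ {x | |f x| ≤ n} with hA
  have hAmeas : ∀ n, MeasurableSet (A n) := fun n =>
    measurableSet_Icc.inter ((hf.abs) measurableSet_Iic)
  have hcover : Icc (0 : ℝ) 1 ⊆ ⋃ n, A n := by
    intro x hx
    obtain ⟨n, hn⟩ := exists_nat_ge (|f x|)
    exact mem_iUnion.2 ⟨n, hx, hn⟩
  have hpos : ∃ n, 0 < volume (A n) := by
    by_contra h
    push_neg at h
    have h0 : ∀ n, volume (A n) = 0 := fun n => le_antisymm (h n) zero_le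
    have : volume (⋃ n, A n) = 0 := measure_iUnion_null h0
    have h1 : volume (Icc (0 : ℝ) 1) = 0 :=
      le_antisymm (le_trans (measure_mono hcover) this.le) zero_le
    rw [Real.volume_Icc] at h1
    norm_num at h1
  obtain ⟨n, hn⟩ := hpos
  have hst : A n - A n ∈ nhds (0 : ℝ) :=
    sub_mem_nhds_zero_of_addHaar_pos volume (A n) (hAmeas n) hn
  obtain ⟨δ, hδ, hball⟩ := Metric.mem_nhds_iff.1 hst
  refine ⟨2 * n, δ, hδ, fun z hz => ?_⟩
  have hzmem : z ∈ A n - A n := hball (by simpa [Real.dist_eq] using hz)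
  obtain ⟨a, ha, b, hb, hab⟩ := Set.mem_sub.1 hzmem
  have hfz : f z = f a - f b := by
    have := hadd (a - b) b
    rw [sub_add_cancel] at this
    rw [← hab]
    linarith
  calc |f z| = |f a - f b| := by rw [hfz]
    _ ≤ |f a| + |f b| := abs_sub _ _
    _ ≤ n + n := add_le_add ha.2 hb.2
    _ = 2 * n := by ring

/-- A measurable additive function `ℝ → ℝ` is continuous at `0`. -/
lemma aux_tendsto_zero (f : ℝ → ℝ) (hf : Measurable f)
    (hadd : ∀ x y, f (x + y) = f x + f y) :
    Tendsto f (nhds 0) (nhds 0) := by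
  obtain ⟨C, δ, hδ, hC⟩ := aux_bounded_near_zero f hf hadd
  set F : ℝ →+ ℝ := AddMonoidHom.mk' f hadd with hF
  have hC0 : 0 ≤ C := le_trans (abs_nonneg _) (hC 0 (by simpa using hδ))
  rw [Metric.tendsto_nhds_nhds]
  intro ε hε
  obtain ⟨k, hk⟩ := exists_nat_gt (C / ε)
  have hk0 : 0 < (k : ℝ) := lt_of_le_of_lt (div_nonneg hC0 hε.le) hk
  refine ⟨δ / k, div_pos hδ hk0, fun {z} hz => ?_⟩
  rw [Real.dist_eq, sub_zero] at hz
  have hkz : |(k : ℝ) * z| < δ := by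
    rw [abs_mul, abs_of_pos hk0]
    calc (k : ℝ) * |z| < k * (δ / k) := by
          exact mul_lt_mul_of_pos_left hz hk0
      _ = δ := by field_simp
  have hfkz : f ((k : ℝ) * z) = (k : ℝ) * f z := by
    have := map_nsmul F k z
    simpa [F, nsmul_eq_mul] using this
  have h1 : |f z| = |f ((k : ℝ) * z)| / k := by
    rw [hfkz, abs_mul, abs_of_pos hk0, mul_div_cancel_left₀ _ hk0.ne']
  rw [Real.dist_eq, sub_zero, h1]
  calc |f ((k : ℝ) * z)| / k ≤ C / k := by
        gcongr
        exact hC _ hkz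
    _ < ε := by
        rw [div_lt_iff₀ hk0]
        calc C = (C / ε) * ε := by field_simp
          _ < k * ε := by exact mul_lt_mul_of_pos_right hk hε
          _ = ε * k := by ring
    
/-- Measurable solutions of Cauchy's functional equation on `ℝ` are linear. -/
lemma aux_additive_measurable_linear (f : ℝ → ℝ) (hf : Measurable f)
    (hadd : ∀ x y, f (x + y) = f x + f y) :
    ∀ x : ℝ, f x = f 1 * x := by
  set F : ℝ →+ ℝ := AddMonoidHom.mk' f hadd with hF
  have h0 : Tendsto f (nhds 0) (nhds 0) := aux_tendsto_zero f hf hadd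
  have hcont : Continuous f := by
    rw [continuous_iff_continuousAt]
    intro x
    have h1 : Tendsto (fun y : ℝ => y - x) (nhds x) (nhds 0) := by
      have := (continuous_id.sub (continuous_const (y := x))).tendsto x
      simp at this
      exact this
    have h2 : Tendsto (fun y : ℝ => f x + f (y - x)) (nhds x) (nhds (f x + 0)) :=
      tendsto_const_nhds.add (h0.comp h1)
    have h3 : (fun y : ℝ => f x + f (y - x)) = f := by
      funext y
      rw [← hadd x (y - x)]
      ring_nf
    rw [h3] at h2
    rw [add_zero] at h2
    exact h2
  have hrat : ∀ q : ℚ, f (q : ℝ) = (q : ℝ) * f 1 := by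
    intro q
    have := map_ratCast_smul F ℝ ℝ q 1
    simpa [F, smul_eq_mul] using this
  have hdense : Dense (Set.range ((↑) : ℚ → ℝ)) := Rat.denseRange_cast
  have heq : f = fun x : ℝ => f 1 * x := by
    apply Continuous.ext_on hdense hcont (continuous_const.mul continuous_id)
    rintro x ⟨q, rfl⟩
    simp [hrat q, mul_comm]
  intro x
  exact congrFun heq x

end Aux

/-- Characterization theorem for regularly varying functions: if
`g(t) = lim_{x→∞} Q(tx)/Q(x)` exists, is finite and nonzero for all `t > 0`,
then `g(t) = t^γ` for some `γ ∈ ℝ`. -/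
theorem regular_variation_characterization (Q g : ℝ → ℝ)
    (hQmeas : Measurable Q) (hQpos : ∀ x > 0, 0 < Q x)
    (hg : ∀ t > 0, g t ≠ 0 ∧
      Tendsto (fun x => Q (t * x) / Q x) atTop (nhds (g t))) :
    ∃ γ : ℝ, ∀ t > 0, g t = t ^ γ := by
  -- g is positive on (0, ∞)
  have gpos : ∀ t > 0, 0 < g t := by
    intro t ht
    have h := (hg t ht).2
    have hge : 0 ≤ g t := by
      refine ge_of_tendsto h ?_
      filter_upwards [eventually_gt_atTop (0 : ℝ)] with x hx
      exact div_nonneg (hQpos _ (mul_pos ht hx)).le (hQpos _ hx).le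
    exact lt_of_le_of_ne hge (Ne.symm (hg t ht).1)
  -- g is multiplicative on (0, ∞)
  have gmul : ∀ s > 0, ∀ t > 0, g (s * t) = g s * g t := by
    intro s hs t ht
    have hts : Tendsto (fun x : ℝ => t * x) atTop atTop :=
      Tendsto.const_mul_atTop ht tendsto_id
    have h1 : Tendsto (fun x => Q (s * (t * x)) / Q (t * x)) atTop (nhds (g s)) :=
      (hg s hs).2.comp hts
    have h2 : Tendsto (fun x => (Q (s * (t * x)) / Q (t * x)) * (Q (t * x) / Q x))
        atTop (nhds (g s * g t)) := h1.mul (hg t ht).2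
    have h3 : Tendsto (fun x => Q (s * t * x) / Q x) atTop (nhds (g s * g t)) := by
      refine h2.congr' ?_
      filter_upwards [eventually_gt_atTop (0 : ℝ)] with x hx
      have hQtx : Q (t * x) ≠ 0 := (hQpos _ (mul_pos ht hx)).ne'
      field_simp [mul_assoc]
    exact tendsto_nhds_unique (hg (s * t) (mul_pos hs ht)).2 h3
  -- the function f u = log (g (exp u)) is measurable
  set f : ℝ → ℝ := fun u => Real.log (g (Real.exp u)) with hfdef
  have hseq : Tendsto (fun n : ℕ => ((n : ℝ) + 1)) atTop atTop :=
    tendsto_atTop_add_const_right _ 1 tendsto_natCast_atTop_atTop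
  have hconv : ∀ u : ℝ, Tendsto
      (fun n : ℕ => Real.log (Q (Real.exp u * ((n : ℝ) + 1)) / Q ((n : ℝ) + 1)))
      atTop (nhds (f u)) := by
    intro u
    have ht : (0 : ℝ) < Real.exp u := Real.exp_pos u
    have h1 : Tendsto (fun n : ℕ => Q (Real.exp u * ((n : ℝ) + 1)) / Q ((n : ℝ) + 1))
        atTop (nhds (g (Real.exp u))) := (hg _ ht).2.comp hseq
    exact ((Real.continuousAt_log (gpos _ ht).ne').tendsto.comp h1)
  have hfmeas : Measurable f := by
    refine measurable_of_tendsto_metrizable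
      (f := fun n : ℕ => fun u : ℝ =>
        Real.log (Q (Real.exp u * ((n : ℝ) + 1)) / Q ((n : ℝ) + 1)))
      (fun n => ?_) (tendsto_pi_nhds.2 hconv)
    exact Real.measurable_log.comp
      ((hQmeas.comp ((Real.measurable_exp).mul_const _)).div_const _)
  -- f is additive
  have hfadd : ∀ u v : ℝ, f (u + v) = f u + f v := by
    intro u v
    have hu : (0 : ℝ) < Real.exp u := Real.exp_pos u
    have hv : (0 : ℝ) < Real.exp v := Real.exp_pos v
    simp only [hfdef, Real.exp_add]
    rw [gmul _ hu _ hv, Real.log_mul (gpos _ hu).ne' (gpos _ hv).ne']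
  -- conclude
  have hlin := aux_additive_measurable_linear f hfmeas hfadd
  refine ⟨f 1, fun t ht => ?_⟩
  have h1 : f (Real.log t) = f 1 * Real.log t := hlin _
  have h2 : f (Real.log t) = Real.log (g t) := by
    rw [hfdef]
    simp [Real.exp_log ht]
  rw [h2] at h1
  have := congrArg Real.exp h1
  rw [Real.exp_log (gpos t ht)] at this
  rw [this, Real.rpow_def_of_pos ht]
  ring_nf
end

section
/- Let U₁, …, U_k be i.i.d. uniform random variables on [0,1]. Then for every λ ≥ 1, P( sup_{0 < s ≤ 1} (#{i ≤ k : U_i ≤ s}/k)/s ≥ λ ) = 1/λ. -/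
open MeasureTheory ProbabilityTheory Finset

/-- count of coordinates `≤ a` -/
noncomputable def dCnt {k : ℕ} (a : ℝ) (x : Fin k → ℝ) : ℕ := ∑ i, if x i ≤ a then 1 else 0

lemma dCnt_eq_card {k : ℕ} (a : ℝ) (x : Fin k → ℝ) :
    (univ.filter fun i => x i ≤ a).card = dCnt a x := by
  rw [Finset.card_filter]
  exact Finset.sum_congr rfl fun i _ => if_congr Iff.rfl rfl rfl

lemma dCnt_le {k : ℕ} (a : ℝ) (x : Fin k → ℝ) : dCnt a x ≤ k := by
  calc dCnt a x ≤ ∑ _i : Fin k, 1 := Finset.sum_le_sum (fun i _ => by split <;> simp)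
  _ = k := by simp

lemma dCnt_le_of {k : ℕ} {a b : ℝ} {x : Fin k → ℝ} (h : ∀ l, x l ≤ a → x l ≤ b) :
    dCnt a x ≤ dCnt b x := by
  refine Finset.sum_le_sum fun i _ => ?_
  by_cases hx : x i ≤ a
  · simp [hx, h i hx]
  · simp [hx]

lemma dCnt_mono {k : ℕ} {a b : ℝ} (h : a ≤ b) (x : Fin k → ℝ) : dCnt a x ≤ dCnt b x :=
  dCnt_le_of fun _ hl => hl.trans h

lemma measurable_dCnt {k : ℕ} (a : ℝ) : Measurable (dCnt (k := k) a) :=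
  Finset.measurable_sum _ fun i _ =>
    Measurable.ite (measurableSet_le (measurable_pi_apply i) measurable_const)
      measurable_const measurable_const

lemma dCnt_comp_equiv {k : ℕ} (a : ℝ) (x : Fin k → ℝ) (e : Fin k ≃ Fin k) :
    dCnt a (x ∘ e) = dCnt a x :=
  Fintype.sum_equiv e _ _ fun _ => rfl

lemma dCnt_insertNth {k : ℕ} (a m : ℝ) (i : Fin (k + 1)) (y : Fin k → ℝ) :
    dCnt a (i.insertNth m y) = (if m ≤ a then 1 else 0) + dCnt a y := by
  unfold dCnt
  rw [Fin.sum_univ_succAbove _ i]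
  simp

lemma dNullConst {k : ℕ} (i : Fin k) (t : ℝ) :
    (Measure.pi fun _ : Fin k => (volume : Measure ℝ)) {x | x i = t} = 0 := by
  rcases k with _ | n
  · exact i.elim0
  · have h := measurePreserving_piFinSuccAbove (fun _ : Fin (n + 1) => (volume : Measure ℝ)) i
    have hs : {x : Fin (n+1) → ℝ | x i = t}
        = (MeasurableEquiv.piFinSuccAbove (fun _ => ℝ) i) ⁻¹' {p | p.1 = t} := by
      ext x; rfl
    have hms : MeasurableSet {p : ℝ × (Fin n → ℝ) | p.1 = t} :=
      measurableSet_eq_fun measurable_fst measurable_const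
    rw [hs, h.measure_preimage hms.nullMeasurableSet]
    have : {p : ℝ × (Fin n → ℝ) | p.1 = t} = {t} ×ˢ Set.univ := by
      ext p; simp [Set.mem_prod, eq_comm, Prod.ext_iff]
    rw [this, Measure.prod_prod]
    simp

lemma dNullPair {k : ℕ} (i j : Fin k) (hij : i ≠ j) :
    (Measure.pi fun _ : Fin k => (volume : Measure ℝ)) {x | x i = x j} = 0 := by
  rcases k with _ | n
  · exact i.elim0
  · obtain ⟨j', hj'⟩ := Fin.exists_succAbove_eq (Ne.symm hij)
    have h := measurePreserving_piFinSuccAbove (fun _ : Fin (n + 1) => (volume : Measure ℝ)) i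
    have hs : {x : Fin (n+1) → ℝ | x i = x j}
        = (MeasurableEquiv.piFinSuccAbove (fun _ => ℝ) i) ⁻¹' {p | p.1 = p.2 j'} := by
      ext x
      simp only [Set.mem_preimage, Set.mem_setOf_eq, MeasurableEquiv.piFinSuccAbove]
      rw [← hj']
      rfl
    have hms : MeasurableSet {p : ℝ × (Fin n → ℝ) | p.1 = p.2 j'} :=
      measurableSet_eq_fun measurable_fst ((measurable_pi_apply j').comp measurable_snd)
    rw [hs, h.measure_preimage hms.nullMeasurableSet]
    rw [Measure.prod_apply hms]
    have : ∀ a : ℝ, (Measure.pi fun _ : Fin n => (volume : Measure ℝ))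
        (Prod.mk a ⁻¹' {p : ℝ × (Fin n → ℝ) | p.1 = p.2 j'}) = 0 := by
      intro a
      have : (Prod.mk a ⁻¹' {p : ℝ × (Fin n → ℝ) | p.1 = p.2 j'}) = {y | y j' = a} := by
        ext y; simp [eq_comm]
      rw [this, dNullConst]
    have h0 : ∀ a : ℝ, (Measure.pi fun _ : Fin n => (volume : Measure ℝ)) {y | a = y j'} = 0 := by
      intro a
      have := this a
      have he : (Prod.mk a ⁻¹' {p : ℝ × (Fin n → ℝ) | p.1 = p.2 j'}) = {y | a = y j'} := by
        ext y; simp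
      rwa [he] at this
    simp [h0]

lemma dCnt_pos {k : ℕ} {x : Fin k → ℝ} {a : ℝ} (i : Fin k) (hi : x i ≤ a) :
    1 ≤ dCnt a x := by
  unfold dCnt
  calc (1:ℕ) = if x i ≤ a then 1 else 0 := by simp [hi]
  _ ≤ ∑ l, if x l ≤ a then 1 else 0 :=
      Finset.single_le_sum (f := fun l => if x l ≤ a then 1 else 0)
        (fun l _ => by positivity) (mem_univ i)

/-- Pointwise characterization of the supremum event. -/
lemma sup_char {k : ℕ} (hk : 1 ≤ k) {lam : ℝ} (hlam : 1 ≤ lam) (x : Fin k → ℝ)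
    (hx : ∀ i, x i ∈ Set.Ioc (0:ℝ) 1) :
    (lam ≤ sSup ((fun s : ℝ =>
        (((univ.filter fun i : Fin k => x i ≤ s).card : ℝ) / k) / s) '' Set.Ioc 0 1)) ↔
      ∃ j ∈ Finset.Icc 1 k, j ≤ dCnt ((1/(k*lam)) * j) x := by
  have hk0 : (0:ℝ) < k := by exact_mod_cast hk
  have hl0 : (0:ℝ) < lam := lt_of_lt_of_le one_pos hlam
  have hc0 : (0:ℝ) < 1/(k*lam) := by positivity
  set c : ℝ := 1/(k*lam) with hc
  set ratio : ℝ → ℝ := fun s => (((univ.filter fun i : Fin k => x i ≤ s).card : ℝ) / k) / s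
    with hratio
  have hratio' : ∀ s, ratio s = ((dCnt s x : ℝ) / k) / s := by
    intro s; rw [hratio]; simp only [dCnt_eq_card]
  have hne : Nonempty (Fin k) := ⟨⟨0, hk⟩⟩
  have huniv : (univ : Finset (Fin k)).Nonempty := univ_nonempty
  -- lower bound for coordinates
  set m : ℝ := univ.inf' huniv x with hm
  have hm0 : 0 < m := by
    rw [hm, Finset.lt_inf'_iff]
    exact fun i _ => (hx i).1
  have hmle : ∀ i, m ≤ x i := fun i => Finset.inf'_le _ (mem_univ i)
  have hbdd : ∀ s ∈ Set.Ioc (0:ℝ) 1, ratio s ≤ 1/m := by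
    intro s hs
    rw [hratio']
    rcases lt_or_ge s m with h | h
    · have : dCnt s x = 0 := by
        unfold dCnt
        refine Finset.sum_eq_zero fun i _ => ?_
        have : ¬ x i ≤ s := not_le.2 (lt_of_lt_of_le h (hmle i))
        simp [this]
      rw [this]
      simp
      positivity
    · have h1 : ((dCnt s x : ℝ) / k) ≤ 1 := by
        rw [div_le_one hk0]
        exact_mod_cast dCnt_le s x
      calc ((dCnt s x : ℝ) / k) / s ≤ 1 / s := div_le_div₀ zero_le_one h1 hs.1 le_rfl
      _ ≤ 1 / m := one_div_le_one_div_of_le hm0 h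
  have hBdd : BddAbove ((fun s : ℝ =>
      (((univ.filter fun i : Fin k => x i ≤ s).card : ℝ) / k) / s) '' Set.Ioc 0 1) := by
    refine ⟨1/m, ?_⟩
    rintro r ⟨s, hs, rfl⟩
    exact hbdd s hs
  constructor
  · intro h
    -- sup is bounded by max over sample points
    set R : ℝ := univ.sup' huniv (fun i => ratio (x i)) with hR
    have hRnn : 0 ≤ R := by
      obtain ⟨i⟩ := hne
      refine le_trans ?_ (Finset.le_sup' _ (mem_univ i))
      rw [hratio']
      have hxi0 : (0:ℝ) < x i := (hx i).1
      positivity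
    have hsupR : ∀ s ∈ Set.Ioc (0:ℝ) 1, ratio s ≤ R := by
      intro s hs
      rcases Nat.eq_zero_or_pos (dCnt s x) with h0 | h0
      · rw [hratio', h0]
        simpa using hRnn
      · -- pick the largest sample point below s
        have hFne : (univ.filter fun i => x i ≤ s).Nonempty := by
          rw [← Finset.card_pos, dCnt_eq_card]
          exact h0
        obtain ⟨i0, hi0mem, hi0max⟩ := Finset.exists_max_image _ x hFne
        have hi0 : x i0 ≤ s := (Finset.mem_filter.1 hi0mem).2
        have hcnt : dCnt s x ≤ dCnt (x i0) x := by
          refine dCnt_le_of fun l hl => ?_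
          exact hi0max l (Finset.mem_filter.2 ⟨mem_univ l, hl⟩)
        have : ratio s ≤ ratio (x i0) := by
          rw [hratio', hratio']
          have h1 : (0:ℝ) < x i0 := (hx i0).1
          have hcnt' : ((dCnt s x : ℝ)) ≤ (dCnt (x i0) x : ℝ) := by exact_mod_cast hcnt
          exact div_le_div₀ (by positivity) (by gcongr) h1 hi0
        exact this.trans (Finset.le_sup' (fun i => ratio (x i)) (mem_univ i0))
    have hle : lam ≤ R := le_trans h (csSup_le (by
        exact ⟨ratio 1, ⟨1, by norm_num, rfl⟩⟩) (by rintro r ⟨s, hs, rfl⟩; exact hsupR s hs))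
    obtain ⟨i, _, hi⟩ := Finset.exists_mem_eq_sup' huniv (fun i => ratio (x i))
    have hlami : lam ≤ ratio (x i) := hi ▸ hle
    set j : ℕ := dCnt (x i) x with hj
    have hj1 : 1 ≤ j := dCnt_pos i le_rfl
    have hjk : j ≤ k := dCnt_le _ _
    refine ⟨j, Finset.mem_Icc.2 ⟨hj1, hjk⟩, ?_⟩
    have hxi : x i ≤ c * j := by
      rw [hratio'] at hlami
      have hxi0 : 0 < x i := (hx i).1
      rw [le_div_iff₀ hxi0, le_div_iff₀ hk0] at hlami
      -- hlami : lam * x i * k ≤ j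
      have hcj : c * (j:ℝ) = (j:ℝ)/(k*lam) := by rw [hc]; ring
      rw [hcj, le_div_iff₀ (by positivity : (0:ℝ) < (k:ℝ)*lam)]
      nlinarith [hlami]
    calc j = dCnt (x i) x := hj
    _ ≤ dCnt (c * j) x := dCnt_mono hxi x
  · rintro ⟨j, hjmem, hjcnt⟩
    obtain ⟨hj1, hjk⟩ := Finset.mem_Icc.1 hjmem
    have hj0 : (0:ℝ) < j := by exact_mod_cast hj1
    have hs1 : c * j ∈ Set.Ioc (0:ℝ) 1 := by
      constructor
      · positivity
      · rw [hc]
        have : (j:ℝ) ≤ k := by exact_mod_cast hjk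
        rw [div_mul_eq_mul_div, div_le_one (by positivity)]
        nlinarith
    have hval : lam ≤ ratio (c * j) := by
      rw [hratio']
      have hcnt' : (j : ℝ) ≤ (dCnt (c * j) x : ℝ) := by exact_mod_cast hjcnt
      have : ((j:ℝ) / k) / (c * j) ≤ ((dCnt (c * j) x : ℝ) / k) / (c * j) := by
        gcongr
      refine le_trans (le_of_eq ?_) this
      rw [hc]
      field_simp
    exact le_trans hval (le_csSup hBdd ⟨c * j, hs1, rfl⟩)

def dBox (k : ℕ) (T : ℝ) : Set (Fin k → ℝ) := {x | ∀ i, x i ∈ Set.Icc 0 T}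
def dGood (k : ℕ) (c : ℝ) : Set (Fin k → ℝ) := {x | ∀ j ∈ Finset.Icc 1 k, dCnt (c * j) x < j}

lemma measurableSet_dBox (k : ℕ) (T : ℝ) : MeasurableSet (dBox k T) := by
  have : dBox k T = ⋂ i, (fun x : Fin k → ℝ => x i) ⁻¹' Set.Icc 0 T := by
    ext x; simp [dBox]
  rw [this]
  exact MeasurableSet.iInter fun i => (measurable_pi_apply i) measurableSet_Icc

lemma measurableSet_dGood (k : ℕ) (c : ℝ) : MeasurableSet (dGood k c) := by
  have : dGood k c = ⋂ j ∈ Finset.Icc 1 k, dCnt (c * j) ⁻¹' {n | n < j} := by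
    ext x; simp [dGood]
  rw [this]
  exact MeasurableSet.biInter (Finset.Icc 1 k).countable_toSet
    fun j _ => (measurable_dCnt _) trivial

/-- The core volume identity. -/
lemma dCore (k : ℕ) : ∀ (c T : ℝ), 0 ≤ c → (k:ℝ) * c ≤ T →
    (Measure.pi fun _ : Fin k => (volume : Measure ℝ)) (dBox k T ∩ dGood k c)
      = ENNReal.ofReal (T^k - (k:ℝ) * c * T^(k-1)) := by
  induction k with
  | zero =>
    intro c T hc hT
    have h1 : dBox 0 T ∩ dGood 0 c = Set.univ := by
      ext x
      simp [dBox, dGood]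
    rw [h1]
    simp [Measure.pi_univ]
  | succ k IH =>
    intro c T hc hT
    set μp := (Measure.pi fun _ : Fin (k+1) => (volume : Measure ℝ)) with hμp
    set μk := (Measure.pi fun _ : Fin k => (volume : Measure ℝ)) with hμk
    set S := dBox (k+1) T ∩ dGood (k+1) c with hS
    have hSm : MeasurableSet S := (measurableSet_dBox _ _).inter (measurableSet_dGood _ _)
    set M : Fin (k+1) → Set (Fin (k+1) → ℝ) := fun i => {x | ∀ l, l ≠ i → x l < x i} with hM
    have hMm : ∀ i, MeasurableSet (M i) := by
      intro i
      have : M i = ⋂ l, ⋂ (_ : l ≠ i), {x : Fin (k+1) → ℝ | x l < x i} := by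
        ext x; simp [hM]
      rw [this]
      exact MeasurableSet.iInter fun l => MeasurableSet.iInter fun _ =>
        measurableSet_lt (measurable_pi_apply l) (measurable_pi_apply i)
    -- Step 1 : decompose along the strict argmax
    have step1 : μp S = ∑ i, μp (S ∩ M i) := by
      have hdiff : μp (S \ ⋃ i, M i) = 0 := by
        have hincl : S \ ⋃ i, M i ⊆ ⋃ (i) (l) (_ : i ≠ l), {x : Fin (k+1) → ℝ | x i = x l} := by
          rintro x ⟨-, hx2⟩
          obtain ⟨i0, hi0⟩ : ∃ i0, ∀ l, x l ≤ x i0 := Finite.exists_max x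
          have : x ∉ M i0 := fun hmem => hx2 (Set.mem_iUnion.2 ⟨i0, hmem⟩)
          simp only [hM, Set.mem_setOf_eq, not_forall] at this
          obtain ⟨l, hl, hxl⟩ := this
          refine Set.mem_iUnion.2 ⟨i0, Set.mem_iUnion.2 ⟨l, Set.mem_iUnion.2
            ⟨Ne.symm hl, le_antisymm (not_lt.1 hxl) (hi0 l)⟩⟩⟩
        exact measure_mono_null hincl (measure_iUnion_null fun i => measure_iUnion_null fun l =>
            measure_iUnion_null fun hil => dNullPair i l hil)
      have h1 : μp (S ∩ ⋃ i, M i) + μp (S \ ⋃ i, M i) = μp S :=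
        measure_inter_add_diff S (MeasurableSet.iUnion hMm)
      have h2 : μp S = μp (S ∩ ⋃ i, M i) := by
        rw [← h1, hdiff, add_zero]
      rw [h2, Set.inter_iUnion]
      rw [measure_iUnion ?hdisj fun i => hSm.inter (hMm i), tsum_fintype]
      case hdisj =>
        intro i j hij
        simp only [Set.disjoint_left]
        rintro x ⟨-, hxi⟩ ⟨-, hxj⟩
        exact lt_asymm (hxi j hij.symm) (hxj i hij)
    -- Step 2 : all pieces have the same volume
    have step2 : ∀ i, μp (S ∩ M i) = μp (S ∩ M (Fin.last k)) := by
      intro i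
      set e : Fin (k+1) ≃ Fin (k+1) := Equiv.swap i (Fin.last k) with he
      have hmp := measurePreserving_piCongrLeft (fun _ : Fin (k+1) => (volume : Measure ℝ)) e
      have hcomp : ∀ (x : Fin (k+1) → ℝ) (f : Fin (k+1) ≃ Fin (k+1)),
          (x ∘ f ∈ S ↔ x ∈ S) ∧ ∀ i', (x ∘ f ∈ M i' ↔ x ∈ M (f i')) := by
        intro x f
        constructor
        · rw [hS]
          have hbox : x ∘ f ∈ dBox (k+1) T ↔ x ∈ dBox (k+1) T := by
            constructor
            · intro h i'
              simpa using h (f.symm i')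
            · intro h i'
              exact h (f i')
          have hgood : x ∘ f ∈ dGood (k+1) c ↔ x ∈ dGood (k+1) c := by
            unfold dGood
            simp only [Set.mem_setOf_eq, dCnt_comp_equiv]
          rw [Set.mem_inter_iff, Set.mem_inter_iff, hbox, hgood]
        · intro i'
          simp only [hM, Set.mem_setOf_eq, Function.comp_apply]
          constructor
          · intro h l' hl'
            have : f.symm l' ≠ i' := fun hcon => hl' (by rw [← hcon]; simp)
            simpa using h (f.symm l') this
          · intro h l hl
            exact h (f l) (fun hcon => hl (f.injective hcon))
      have hpre : (MeasurableEquiv.piCongrLeft (fun _ : Fin (k+1) => ℝ) e).symm ⁻¹'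
          (S ∩ M i) = S ∩ M (Fin.last k) := by
        ext x
        have happ : (MeasurableEquiv.piCongrLeft (fun _ : Fin (k+1) => ℝ) e).symm x
            = x ∘ e := by
          funext a
          rfl
        rw [Set.mem_preimage, happ]
        have h1 := (hcomp x e).1
        have h2 := (hcomp x e).2 i
        have hgoal : x ∘ ⇑e ∈ S ∩ M i ↔ x ∈ S ∩ M (e i) := and_congr h1 h2
        rw [he, Equiv.swap_apply_left] at hgoal
        exact hgoal
      have hmps := hmp.symm (MeasurableEquiv.piCongrLeft (fun _ : Fin (k+1) => ℝ) e)
      calc μp (S ∩ M i)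
          = μp ((MeasurableEquiv.piCongrLeft (fun _ : Fin (k+1) => ℝ) e).symm ⁻¹'
              (S ∩ M i)) := (hmps.measure_preimage (hSm.inter (hMm i)).nullMeasurableSet).symm
      _ = μp (S ∩ M (Fin.last k)) := by rw [hpre]
    -- Step 3 : compute the last piece by Fubini
    set a : ℝ := c * ((k:ℝ) + 1) with ha
    have ha0 : 0 ≤ a := by rw [ha]; positivity
    have haT : a ≤ T := by
      have : ((k+1 : ℕ):ℝ) * c ≤ T := hT
      push_cast at this
      rw [ha]; linarith
    have hg : ∀ m ∈ Set.Ioc a T, 0 ≤ m^k - (k:ℝ) * c * m^(k-1) := by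
      intro m hmm
      have hm0 : 0 ≤ m := ha0.trans hmm.1.le
      have hkcm : (k:ℝ) * c ≤ m := by
        refine le_trans ?_ hmm.1.le
        rw [ha]; nlinarith
      rcases Nat.eq_zero_or_pos k with rfl | hk1
      · simp
      · have hk1' : k - 1 + 1 = k := Nat.succ_pred_eq_of_pos hk1
        have hpowk : m ^ k = m ^ (k-1) * m := by
          conv_lhs => rw [← hk1']
          rw [pow_succ]
        rw [hpowk]
        have hpnn : (0:ℝ) ≤ m ^ (k-1) := pow_nonneg hm0 _
        nlinarith [mul_le_mul_of_nonneg_left hkcm hpnn]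
    have step3 : μp (S ∩ M (Fin.last k))
        = ENNReal.ofReal (∫ m in Set.Ioc a T, (m^k - (k:ℝ) * c * m^(k-1))) := by
      set ψ := MeasurableEquiv.piFinSuccAbove (fun _ : Fin (k+1) => ℝ) (Fin.last k) with hψ
      have hmp := measurePreserving_piFinSuccAbove
        (fun _ : Fin (k+1) => (volume : Measure ℝ)) (Fin.last k)
      set B := ψ.symm ⁻¹' (S ∩ M (Fin.last k)) with hB
      have hBm : MeasurableSet B := ψ.symm.measurable (hSm.inter (hMm _))
      have hmps := hmp.symm ψ
      have hpre : μp (S ∩ M (Fin.last k)) = (volume.prod μk) B := by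
        rw [hB, hmps.measure_preimage (hSm.inter (hMm _)).nullMeasurableSet]
      rw [hpre, Measure.prod_apply hBm]
      have hψsymm : ∀ (m : ℝ) (y : Fin k → ℝ),
          ψ.symm (m, y) = (Fin.last k).insertNth m y := fun m y => rfl
      -- membership characterization of slices
      have hmem : ∀ (m : ℝ) (y : Fin k → ℝ), y ∈ Prod.mk m ⁻¹' B ↔
          ((m ∈ Set.Icc (0:ℝ) T ∧ ∀ l, y l ∈ Set.Icc (0:ℝ) T) ∧
            (∀ j ∈ Finset.Icc 1 (k+1),
              (if m ≤ c * (j:ℝ) then 1 else 0) + dCnt (c * (j:ℝ)) y < j)) ∧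
          ∀ l, y l < m := by
        intro m y
        have hrfl : y ∈ Prod.mk m ⁻¹' B ↔
            (((Fin.last k).insertNth m y ∈ dBox (k+1) T ∧
              (Fin.last k).insertNth m y ∈ dGood (k+1) c) ∧
              (Fin.last k).insertNth m y ∈ M (Fin.last k)) := Iff.rfl
        rw [hrfl]
        have hbox : (Fin.last k).insertNth m y ∈ dBox (k+1) T ↔
            (m ∈ Set.Icc (0:ℝ) T ∧ ∀ l, y l ∈ Set.Icc (0:ℝ) T) := by
          unfold dBox
          rw [Set.mem_setOf_eq, Fin.forall_iff_succAbove (Fin.last k)]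
          simp
        have hgood : (Fin.last k).insertNth m y ∈ dGood (k+1) c ↔
            ∀ j ∈ Finset.Icc 1 (k+1),
              (if m ≤ c * (j:ℝ) then 1 else 0) + dCnt (c * (j:ℝ)) y < j := by
          unfold dGood
          simp only [Set.mem_setOf_eq, dCnt_insertNth]
        have hMlast : (Fin.last k).insertNth m y ∈ M (Fin.last k) ↔ ∀ l, y l < m := by
          simp only [hM, Set.mem_setOf_eq, Fin.insertNth_apply_same]
          constructor
          · intro h l
            have := h ((Fin.last k).succAbove l) (Fin.succAbove_ne _ l)
            rwa [Fin.insertNth_apply_succAbove] at this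
          · intro h l hl
            obtain ⟨l', rfl⟩ := Fin.exists_succAbove_eq hl
            rw [Fin.insertNth_apply_succAbove]
            exact h l'
        rw [hbox, hgood, hMlast]
      have hslice : ∀ m : ℝ, μk (Prod.mk m ⁻¹' B)
          = Set.indicator (Set.Ioc a T)
              (fun m => ENNReal.ofReal (m^k - (k:ℝ) * c * m^(k-1))) m := by
        intro m
        by_cases hm : m ∈ Set.Ioc a T
        · rw [Set.indicator_of_mem hm]
          have hset : Prod.mk m ⁻¹' B
              = {y : Fin k → ℝ | ∀ l, y l ∈ Set.Ico 0 m} ∩ dGood k c := by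
            ext y
            rw [hmem m y, Set.mem_inter_iff]
            constructor
            · rintro ⟨⟨⟨hmbox, hybox⟩, hgood⟩, hlt⟩
              refine ⟨fun l => ⟨(hybox l).1, hlt l⟩, ?_⟩
              intro j hj
              obtain ⟨hj1, hjk⟩ := Finset.mem_Icc.1 hj
              have hj' : j ∈ Finset.Icc 1 (k+1) := Finset.mem_Icc.2 ⟨hj1, hjk.trans (Nat.le_succ k)⟩
              have := hgood j hj'
              omega
            · rintro ⟨hIco, hgood⟩
              have hm0 : 0 ≤ m := ha0.trans hm.1.le
              refine ⟨⟨⟨⟨hm0, hm.2⟩, fun l => ⟨(hIco l).1, ((hIco l).2.le.trans hm.2)⟩⟩, ?_⟩,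
                fun l => (hIco l).2⟩
              intro j hj
              obtain ⟨hj1, hjk⟩ := Finset.mem_Icc.1 hj
              have hcjm : c * (j:ℝ) < m := by
                have h1 : (j:ℝ) ≤ (k:ℝ) + 1 := by exact_mod_cast hjk
                have : c * (j:ℝ) ≤ a := by rw [ha]; nlinarith
                exact lt_of_le_of_lt this hm.1
              rw [if_neg (not_le.2 hcjm), zero_add]
              rcases Nat.lt_succ_iff_lt_or_eq.1 (Nat.lt_succ_of_le hjk) with h | rfl
              · exact hgood j (Finset.mem_Icc.2 ⟨hj1, Nat.lt_succ_iff.1 h⟩)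
              · exact Nat.lt_succ_of_le (dCnt_le _ _)
          rw [hset]
          have hIcc : μk ({y : Fin k → ℝ | ∀ l, y l ∈ Set.Ico 0 m} ∩ dGood k c)
              = μk (dBox k m ∩ dGood k c) := by
            apply le_antisymm
            · apply measure_mono
              rintro y ⟨h1, h2⟩
              exact ⟨fun l => ⟨(h1 l).1, (h1 l).2.le⟩, h2⟩
            · have hsub : (dBox k m ∩ dGood k c) ⊆
                  ({y : Fin k → ℝ | ∀ l, y l ∈ Set.Ico 0 m} ∩ dGood k c)
                    ∪ ⋃ l, {y : Fin k → ℝ | y l = m} := by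
                rintro y ⟨h1, h2⟩
                by_cases hy : ∀ l, y l < m
                · exact Or.inl ⟨fun l => ⟨(h1 l).1, hy l⟩, h2⟩
                · push_neg at hy
                  obtain ⟨l, hl⟩ := hy
                  exact Or.inr (Set.mem_iUnion.2 ⟨l, le_antisymm (h1 l).2 hl⟩)
              calc μk (dBox k m ∩ dGood k c)
                  ≤ μk (({y : Fin k → ℝ | ∀ l, y l ∈ Set.Ico 0 m} ∩ dGood k c)
                    ∪ ⋃ l, {y : Fin k → ℝ | y l = m}) := measure_mono hsub
              _ ≤ μk ({y : Fin k → ℝ | ∀ l, y l ∈ Set.Ico 0 m} ∩ dGood k c)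
                    + μk (⋃ l, {y : Fin k → ℝ | y l = m}) := measure_union_le _ _
              _ = μk ({y : Fin k → ℝ | ∀ l, y l ∈ Set.Ico 0 m} ∩ dGood k c) := by
                    rw [measure_iUnion_null (fun l => dNullConst l m), add_zero]
          have hkcm : (k:ℝ) * c ≤ m := by
            refine le_trans ?_ hm.1.le
            rw [ha]; nlinarith
          rw [hIcc, IH c m hc hkcm]
        · rw [Set.indicator_of_notMem hm]
          have hempty : Prod.mk m ⁻¹' B = ∅ := by
            ext y
            simp only [Set.mem_empty_iff_false, iff_false]
            intro hy
            rw [hmem m y] at hy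
            obtain ⟨⟨⟨hmbox, _⟩, hgood⟩, hlt⟩ := hy
            have hma : m ≤ a := by
              by_contra hma'
              push_neg at hma'
              exact hm ⟨hma', hmbox.2⟩
            have hjmem : (k+1) ∈ Finset.Icc 1 (k+1) := Finset.mem_Icc.2 ⟨Nat.succ_le_succ (Nat.zero_le k), le_rfl⟩
            have := hgood (k+1) hjmem
            have hcast : c * (((k+1 : ℕ)):ℝ) = a := by rw [ha]; push_cast; ring
            rw [hcast, if_pos hma] at this
            have hcnt : k ≤ dCnt a y := by
              unfold dCnt
              calc k = ∑ _l : Fin k, 1 := by simp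
              _ ≤ ∑ l, if y l ≤ a then 1 else 0 := by
                  refine Finset.sum_le_sum fun l _ => ?_
                  have : y l ≤ a := (hlt l).le.trans hma
                  simp [this]
            omega
          rw [hempty]
          simp
      rw [lintegral_congr hslice, lintegral_indicator measurableSet_Ioc]
      rw [← ofReal_integral_eq_lintegral_ofReal]
      · exact ((continuous_pow k).sub (continuous_const.mul (continuous_pow (k-1)))).integrableOn_Ioc
      · filter_upwards [ae_restrict_mem measurableSet_Ioc] with m hmm
        exact hg m hmm
    -- Assemble everything
    rw [step1, Finset.sum_congr rfl (fun i _ => step2 i), Finset.sum_const, card_univ,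
      Fintype.card_fin, step3]
    -- compute the integral
    have hintval : ∫ m in Set.Ioc a T, (m^k - (k:ℝ) * c * m^(k-1))
        = (T^(k+1) - a^(k+1))/((k:ℝ)+1) - c * (T^k - a^k) := by
      rw [← intervalIntegral.integral_of_le haT]
      rw [intervalIntegral.integral_sub (intervalIntegral.intervalIntegrable_pow k)
        ((intervalIntegral.intervalIntegrable_pow (k-1)).const_mul _)]
      rw [intervalIntegral.integral_const_mul, integral_pow, integral_pow]
      rcases Nat.eq_zero_or_pos k with rfl | hk1
      · norm_num
      · have hk1' : k - 1 + 1 = k := Nat.succ_pred_eq_of_pos hk1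
        rw [hk1']
        have hkne : ((k:ℝ)) ≠ 0 := by positivity
        push_cast [hk1']
        rw [Nat.cast_sub (by omega : 1 ≤ k), Nat.cast_one]
        field_simp
        have e : (k:ℝ) * (k:ℝ)⁻¹ = 1 := mul_inv_cancel₀ hkne
        linear_combination (-T^k*c - T^k*k*c + a^k*c + a^k*k*c) * e
    rw [hintval]
    rw [nsmul_eq_mul]
    have hcast2 : ((k+1 : ℕ) : ENNReal) = ENNReal.ofReal ((k+1 : ℕ) : ℝ) :=
      (ENNReal.ofReal_natCast _).symm
    rw [hcast2]
    rw [← ENNReal.ofReal_mul (by positivity)]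
    congr 1
    have hak : a ^ (k+1) = a * a ^ k := by rw [pow_succ]; ring
    push_cast
    have hk1 : (0:ℝ) < (k:ℝ) + 1 := by positivity
    field_simp
    rw [hak, ha]
    ring

lemma pi_restrict_Icc (k : ℕ) :
    (Measure.pi fun _ : Fin k => (volume : Measure ℝ).restrict (Set.Icc 0 1))
      = (Measure.pi fun _ : Fin k => (volume : Measure ℝ)).restrict
          (Set.pi Set.univ fun _ => Set.Icc 0 1) := by
  refine Measure.pi_eq fun s hs => ?_
  rw [Measure.restrict_apply (MeasurableSet.univ_pi hs), ← Set.pi_inter_distrib,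
    Measure.pi_pi]
  exact Finset.prod_congr rfl fun i _ => (Measure.restrict_apply (hs i)).symm

/-- Daniels' identity: for `U₁, …, U_k` i.i.d. uniform on `[0,1]` and `λ ≥ 1`,
`P( sup_{0 < s ≤ 1} F̂_k(s)/s ≥ λ ) = 1/λ`, where `F̂_k` is the empirical CDF. -/
theorem daniels_identity {Ω : Type*} [MeasurableSpace Ω] (μ : Measure Ω)
    [IsProbabilityMeasure μ] (k : ℕ) (hk : 1 ≤ k) (U : Fin k → Ω → ℝ)
    (hmeas : ∀ i, Measurable (U i))
    (hindep : iIndepFun U μ)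
    (hunif : ∀ i, Measure.map (U i) μ = volume.restrict (Set.Icc (0:ℝ) 1))
    (lam : ℝ) (hlam : 1 ≤ lam) :
    μ {ω | lam ≤ sSup ((fun s : ℝ =>
        (((univ.filter fun i : Fin k => U i ω ≤ s).card : ℝ) / k) / s)
          '' Set.Ioc 0 1)} = ENNReal.ofReal (1 / lam) := by
  have hk0 : (0:ℝ) < k := by exact_mod_cast hk
  have hl0 : (0:ℝ) < lam := lt_of_lt_of_le one_pos hlam
  set c : ℝ := 1/(k*lam) with hc
  have hc0 : 0 < c := by rw [hc]; positivity
  have hkc : (k:ℝ) * c = 1/lam := by rw [hc]; field_simp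
  set V : Ω → (Fin k → ℝ) := fun ω i => U i ω with hV
  have hVm : Measurable V := measurable_pi_iff.mpr hmeas
  -- joint law
  have hmap : Measure.map V μ = Measure.pi fun _ : Fin k => volume.restrict (Set.Icc 0 1) := by
    haveI : ∀ i : Fin k, SigmaFinite ((volume : Measure ℝ).restrict (Set.Icc 0 1)) :=
      fun _ => inferInstance
    refine (Measure.pi_eq fun s hs => ?_).symm
    rw [Measure.map_apply hVm (MeasurableSet.univ_pi hs)]
    have hpre : V ⁻¹' Set.pi Set.univ s = ⋂ i, U i ⁻¹' s i := by
      ext ω; simp [hV, Set.mem_pi]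
    rw [hpre, hindep.meas_iInter fun i => ⟨s i, hs i, rfl⟩]
    exact Finset.prod_congr rfl fun i _ => by
      rw [← hunif i, Measure.map_apply (hmeas i) (hs i)]
  -- a.e. all coordinates are in (0,1]
  have hGnull : μ {ω | ∀ i, U i ω ∈ Set.Ioc (0:ℝ) 1}ᶜ = 0 := by
    have : {ω | ∀ i, U i ω ∈ Set.Ioc (0:ℝ) 1}ᶜ = ⋃ i, U i ⁻¹' (Set.Ioc (0:ℝ) 1)ᶜ := by
      ext ω; simp [Set.mem_compl_iff]
    rw [this]
    refine measure_iUnion_null fun i => ?_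
    have h1 : μ (U i ⁻¹' (Set.Ioc (0:ℝ) 1)ᶜ)
        = Measure.map (U i) μ (Set.Ioc (0:ℝ) 1)ᶜ := by
      rw [Measure.map_apply (hmeas i) measurableSet_Ioc.compl]
    rw [h1, hunif i, Measure.restrict_apply measurableSet_Ioc.compl]
    have h2 : (Set.Ioc (0:ℝ) 1)ᶜ ∩ Set.Icc 0 1 = {0} := by
      ext t
      simp only [Set.mem_inter_iff, Set.mem_compl_iff, Set.mem_Ioc, Set.mem_Icc,
        Set.mem_singleton_iff, not_and, not_le]
      constructor
      · rintro ⟨h3, h4, h5⟩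
        rcases lt_or_eq_of_le h4 with h6 | h6
        · exact absurd (h3 h6) (not_lt.2 h5)
        · exact h6.symm
      · rintro rfl
        exact ⟨fun h => absurd h (lt_irrefl 0), le_refl 0, zero_le_one⟩
    rw [h2]
    simp
  -- the event, rewritten
  set E : Set (Fin k → ℝ) := {x | ∃ j ∈ Finset.Icc 1 k, j ≤ dCnt (c * (j:ℝ)) x} with hE
  have hEm : MeasurableSet E := by
    have : E = ⋃ j ∈ Finset.Icc 1 k, dCnt (c * (j:ℝ)) ⁻¹' {n | j ≤ n} := by
      ext x; simp [hE]
    rw [this]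
    exact MeasurableSet.biUnion (Finset.Icc 1 k).countable_toSet
      fun j _ => (measurable_dCnt _) trivial
  have hae : {ω | lam ≤ sSup ((fun s : ℝ =>
        (((univ.filter fun i : Fin k => U i ω ≤ s).card : ℝ) / k) / s)
          '' Set.Ioc 0 1)} =ᵐ[μ] V ⁻¹' E := by
    rw [Filter.eventuallyEq_set]
    have hGae : ∀ᵐ ω ∂μ, ∀ i, U i ω ∈ Set.Ioc (0:ℝ) 1 := by
      rw [ae_iff]
      exact hGnull
    filter_upwards [hGae] with ω hω
    exact sup_char hk hlam (V ω) hω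
  rw [measure_congr hae]
  have hμE : μ (V ⁻¹' E) = Measure.map V μ E := (Measure.map_apply hVm hEm).symm
  rw [hμE, hmap, pi_restrict_Icc, Measure.restrict_apply hEm]
  -- complement within the box
  set box : Set (Fin k → ℝ) := Set.pi Set.univ fun _ => Set.Icc 0 1 with hbox
  have hboxB : box = dBox k 1 := by
    ext x
    simp only [hbox, dBox, Set.mem_pi, Set.mem_univ, forall_true_left, Set.mem_setOf_eq,
      Set.mem_Icc, forall_and]
  have hsplit : E ∩ box = box \ (dBox k 1 ∩ dGood k c) := by
    rw [← hboxB]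
    ext x
    simp only [Set.mem_inter_iff, Set.mem_diff, hE, Set.mem_setOf_eq, dGood]
    constructor
    · rintro ⟨⟨j, hj1, hj2⟩, hxb⟩
      exact ⟨hxb, fun hcon => absurd hj2 (not_le.2 ((hcon.2) j hj1))⟩
    · rintro ⟨hxb, hcon⟩
      refine ⟨?_, hxb⟩
      have hng : ¬ (∀ j ∈ Finset.Icc 1 k, dCnt (c * (j:ℝ)) x < j) := fun h => hcon ⟨hxb, h⟩
      push_neg at hng
      obtain ⟨j, hj1, hj2⟩ := hng
      exact ⟨j, hj1, hj2⟩
  rw [hsplit]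
  have hkc1 : (k:ℝ) * c ≤ 1 := by
    rw [hkc]
    exact (div_le_one hl0).mpr hlam
  have hcoreval := dCore k c 1 hc0.le hkc1
  have hcoreval' : (Measure.pi fun _ : Fin k => (volume : Measure ℝ)) (dBox k 1 ∩ dGood k c)
      = ENNReal.ofReal (1 - 1/lam) := by
    rw [hcoreval, one_pow, one_pow, mul_one, hkc]
  have hAm : MeasurableSet (dBox k 1 ∩ dGood k c) :=
    (measurableSet_dBox k 1).inter (measurableSet_dGood k c)
  have hsub : dBox k 1 ∩ dGood k c ⊆ box := by
    rw [hboxB]; exact Set.inter_subset_left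
  have hfin : (Measure.pi fun _ : Fin k => (volume : Measure ℝ)) (dBox k 1 ∩ dGood k c) ≠ ⊤ := by
    rw [hcoreval']
    exact ENNReal.ofReal_ne_top
  rw [measure_diff hsub hAm.nullMeasurableSet hfin, hcoreval']
  have hboxval : (Measure.pi fun _ : Fin k => (volume : Measure ℝ)) box = 1 := by
    rw [hbox, Measure.pi_pi]
    simp [Real.volume_Icc]
  rw [hboxval]
  have h1l : 0 ≤ 1 - 1/lam := by
    rw [sub_nonneg]
    exact (div_le_one hl0).mpr hlam
  calc (1:ENNReal) - ENNReal.ofReal (1 - 1/lam)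
      = ENNReal.ofReal 1 - ENNReal.ofReal (1 - 1/lam) := by rw [ENNReal.ofReal_one]
  _ = ENNReal.ofReal (1 - (1 - 1/lam)) := (ENNReal.ofReal_sub _ h1l).symm
  _ = ENNReal.ofReal (1/lam) := by norm_num
end

section
/- Let G be a CDF on ℝ with Ḡ(θ) = 1 − G(θ), and let n ≥ 2, δ ∈ (0,1]. If a random variable X is generated as X = μ + Z with μ ~ G and Z ~ N(0,1) independent, then P(X ≥ √(2δ log n)) ≥ (1/(6√(2 log n))) · exp( sup_{t ∈ [0,1]} [ log Ḡ(t√(2δ log n)) − (1−t)² δ log n ] ). -/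
open MeasureTheory ProbabilityTheory Real

lemma gauss_tail_lb (a L : ℝ) (ha : 0 ≤ a) (hL : 1 ≤ L) (haL : a ≤ L) :
    Real.exp (-(a ^ 2) / 2) / (6 * L) ≤ ((gaussianReal 0 1) (Set.Ici a)).toReal := by
  have hLpos : (0:ℝ) < L := lt_of_lt_of_le one_pos hL
  have hpdf_nonneg : ∀ x, 0 ≤ gaussianPDFReal 0 1 x := gaussianPDFReal_nonneg 0 1
  rw [gaussianReal_apply_eq_integral 0 one_ne_zero,
    ENNReal.toReal_ofReal (setIntegral_nonneg measurableSet_Ici fun x _ => hpdf_nonneg x)]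
  have hsub : Set.Ioc a (a + 2) ⊆ Set.Ici a := fun x hx => le_of_lt hx.1
  have hstep1 : ∫ x in Set.Ioc a (a+2), gaussianPDFReal 0 1 x
      ≤ ∫ x in Set.Ici a, gaussianPDFReal 0 1 x := by
    refine setIntegral_mono_set ((integrable_gaussianPDFReal 0 1).integrableOn)
      (Filter.Eventually.of_forall fun x => hpdf_nonneg x) (hsub.eventuallyLE)
  have hIoc : ∫ x in Set.Ioc a (a+2), gaussianPDFReal 0 1 x
      = ∫ x in a..(a+2), gaussianPDFReal 0 1 x := by
    rw [intervalIntegral.integral_of_le (by linarith)]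
  -- comparison integrand
  set g : ℝ → ℝ := fun x => (Real.sqrt (2*π))⁻¹ * Real.exp (-(a^2)/2 - (a+1)*(x-a)) with hg
  have hgcont : Continuous g := by fun_prop
  have hpdfcont : Continuous (gaussianPDFReal 0 1) := by
    rw [gaussianPDFReal_def]; fun_prop
  have hstep2 : ∫ x in a..(a+2), g x ≤ ∫ x in a..(a+2), gaussianPDFReal 0 1 x := by
    refine intervalIntegral.integral_mono_on (by linarith)
      (hgcont.intervalIntegrable _ _) (hpdfcont.intervalIntegrable _ _) ?_
    intro x hx
    have hx1 : a ≤ x := hx.1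
    have hx2 : x ≤ a + 2 := hx.2
    simp only [gaussianPDFReal, hg, NNReal.coe_one, mul_one, sub_zero]
    gcongr (Real.sqrt (2*π))⁻¹ * Real.exp ?_
    nlinarith [mul_nonneg (sub_nonneg.mpr hx1) (sub_nonneg.mpr (by linarith : x ≤ a + 2))]
  -- evaluate ∫ g
  have ha1 : (0:ℝ) < a + 1 := by linarith
  have hderiv : ∀ x ∈ Set.uIcc a (a+2), HasDerivAt
      (fun x => -((Real.sqrt (2*π))⁻¹ * (a+1)⁻¹ * Real.exp (-(a^2)/2 - (a+1)*(x-a)))) (g x) x := by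
    intro x _
    have h1 : HasDerivAt (fun x : ℝ => -(a^2)/2 - (a+1)*(x-a)) (-(a+1)) x := by
      have := (((hasDerivAt_id x).sub_const a).const_mul (a+1)).const_sub (-(a^2)/2)
      simpa using this
    have h2 := (h1.exp.const_mul ((Real.sqrt (2*π))⁻¹ * (a+1)⁻¹)).neg
    have h3 : g x = -((Real.sqrt (2*π))⁻¹ * (a+1)⁻¹ * (Real.exp (-(a^2)/2 - (a+1)*(x-a)) * -(a+1))) := by
      rw [hg]
      field_simp
    rw [h3]
    exact h2
  have heval : ∫ x in a..(a+2), g x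
      = (Real.sqrt (2*π))⁻¹ * (a+1)⁻¹ *
        (Real.exp (-(a^2)/2) - Real.exp (-(a^2)/2 - 2*(a+1))) := by
    rw [intervalIntegral.integral_eq_sub_of_hasDerivAt hderiv (hgcont.intervalIntegrable _ _)]
    ring_nf
  -- numerics
  have hsqrtpos : (0:ℝ) < Real.sqrt (2*π) := Real.sqrt_pos.mpr (by positivity)
  have hsqrt251 : Real.sqrt (2*π) ≤ 2.51 := by
    have h2 : (2*π : ℝ) ≤ 2.51^2 := by nlinarith [Real.pi_lt_d2]
    calc Real.sqrt (2*π) ≤ Real.sqrt (2.51^2) := Real.sqrt_le_sqrt h2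
      _ = 2.51 := Real.sqrt_sq (by norm_num)
  have hq : Real.exp (-(2*(a+1))) ≤ 0.14 := by
    have h1 : Real.exp (-(2*(a+1))) ≤ Real.exp (-2) := by
      apply Real.exp_le_exp.mpr; linarith
    have h2 : (7.15:ℝ) < Real.exp 2 := by
      have := Real.exp_one_gt_d9
      rw [show (2:ℝ) = 1 + 1 by norm_num, Real.exp_add]
      nlinarith
    have h3 : Real.exp (-2) ≤ 0.14 := by
      rw [Real.exp_neg]
      rw [inv_le_comm₀ (Real.exp_pos 2) (by norm_num)]
      linarith
    linarith
  have hE : (0:ℝ) < Real.exp (-(a^2)/2) := Real.exp_pos _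
  have hfinal : Real.exp (-(a ^ 2) / 2) / (6 * L)
      ≤ (Real.sqrt (2*π))⁻¹ * (a+1)⁻¹ *
        (Real.exp (-(a^2)/2) - Real.exp (-(a^2)/2 - 2*(a+1))) := by
    have hexp : Real.exp (-(a^2)/2 - 2*(a+1))
        = Real.exp (-(a^2)/2) * Real.exp (-(2*(a+1))) := by
      rw [← Real.exp_add]; ring_nf
    rw [hexp]
    rw [div_le_iff₀ (by positivity)]
    have key : Real.sqrt (2*π) * (a+1) ≤ (1 - Real.exp (-(2*(a+1)))) * (6 * L) := by
      have hq0 : 0 < Real.exp (-(2*(a+1))) := Real.exp_pos _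
      nlinarith [hsqrt251, hq, haL, hL]
    have expand : (Real.sqrt (2*π))⁻¹ * (a+1)⁻¹ *
        (Real.exp (-(a^2)/2) - Real.exp (-(a^2)/2) * Real.exp (-(2*(a+1))))
        = Real.exp (-(a^2)/2) * (1 - Real.exp (-(2*(a+1)))) / (Real.sqrt (2*π) * (a+1)) := by
      field_simp
    rw [expand, div_mul_eq_mul_div, le_div_iff₀ (by positivity)]
    nlinarith [key, hE, mul_le_mul_of_nonneg_left key hE.le]
  calc Real.exp (-(a ^ 2) / 2) / (6 * L) ≤ _ := hfinal
    _ = ∫ x in a..(a+2), g x := heval.symm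
    _ ≤ ∫ x in a..(a+2), gaussianPDFReal 0 1 x := hstep2
    _ = ∫ x in Set.Ioc a (a+2), gaussianPDFReal 0 1 x := hIoc.symm
    _ ≤ _ := hstep1

/-- Lower bound on the non-null tail probability: if `X = μ + Z` with `μ ~ G`
and `Z ~ N(0,1)` independent, then
`P(X ≥ √(2δ log n)) ≥ (1/(6√(2 log n))) · exp( sup_{t∈[0,1]} [log Ḡ(t√(2δ log n)) − (1−t)²δ log n] )`,
where `Ḡ(θ) = P_{μ~G}(μ > θ)` (assumed positive at the threshold so all logs are finite). -/
theorem nonnull_tail_lower_bound (G : Measure ℝ) [IsProbabilityMeasure G]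
    (n : ℕ) (hn : 2 ≤ n) (δ : ℝ) (hδ1 : 0 < δ) (hδ2 : δ ≤ 1)
    (hpos : 0 < (G (Set.Ioi (Real.sqrt (2 * δ * Real.log n)))).toReal) :
    ((G.prod (gaussianReal 0 1))
        {x : ℝ × ℝ | Real.sqrt (2 * δ * Real.log n) ≤ x.1 + x.2}).toReal
      ≥ (1 / (6 * Real.sqrt (2 * Real.log n)))
        * Real.exp (sSup ((fun t : ℝ =>
            Real.log (G (Set.Ioi (t * Real.sqrt (2 * δ * Real.log n)))).toReal
              - (1 - t) ^ 2 * δ * Real.log n) '' Set.Icc 0 1)) := by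
  set s := Real.sqrt (2 * δ * Real.log n) with hs
  set L := Real.sqrt (2 * Real.log n) with hLdef
  set P := ((G.prod (gaussianReal 0 1)) {x : ℝ × ℝ | s ≤ x.1 + x.2}).toReal with hPdef
  have hn2 : (2:ℝ) ≤ (n:ℝ) := by exact_mod_cast hn
  have hlogn : 0 < Real.log n := Real.log_pos (by linarith)
  have hL1 : 1 ≤ L := by
    rw [hLdef, show (1:ℝ) = Real.sqrt 1 from Real.sqrt_one.symm]
    apply Real.sqrt_le_sqrt
    have := Real.log_two_gt_d9
    have hlog2 : Real.log 2 ≤ Real.log n := Real.log_le_log (by norm_num) hn2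
    linarith
  have hLpos : (0:ℝ) < L := lt_of_lt_of_le one_pos hL1
  have hs0 : 0 ≤ s := Real.sqrt_nonneg _
  have hssq : s ^ 2 = 2 * δ * Real.log n := Real.sq_sqrt (by positivity)
  have hsL : s ≤ L := Real.sqrt_le_sqrt (by nlinarith)
  have hcpos : (0:ℝ) < 1 / (6 * L) := by positivity
  set f : ℝ → ℝ := fun t =>
    Real.log (G (Set.Ioi (t * s))).toReal - (1 - t) ^ 2 * δ * Real.log n with hf
  -- key inequality
  have key : ∀ t ∈ Set.Icc (0:ℝ) 1, (1 / (6 * L)) * Real.exp (f t) ≤ P := by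
    rintro t ⟨ht0, ht1⟩
    have hts : t * s ≤ s := by nlinarith
    have hGt : 0 < (G (Set.Ioi (t * s))).toReal := by
      refine lt_of_lt_of_le hpos ?_
      exact ENNReal.toReal_le_toReal (measure_ne_top _ _) (measure_ne_top _ _) |>.mpr
        (measure_mono (Set.Ioi_subset_Ioi hts))
    set a := (1 - t) * s with hadef
    have ha0 : 0 ≤ a := mul_nonneg (by linarith) hs0
    have haL : a ≤ L := le_trans (by nlinarith) hsL
    have ha2 : -(a ^ 2) / 2 = -((1 - t) ^ 2 * δ * Real.log n) := by
      rw [hadef]; rw [mul_pow]; rw [hssq]; ring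
    have hgauss := gauss_tail_lb a L ha0 hL1 haL
    have hincl : (Set.Ioi (t * s)) ×ˢ (Set.Ici a) ⊆ {x : ℝ × ℝ | s ≤ x.1 + x.2} := by
      rintro ⟨x1, x2⟩ ⟨hx1, hx2⟩
      simp only [Set.mem_Ioi] at hx1
      simp only [Set.mem_Ici] at hx2
      simp only [Set.mem_setOf_eq]
      have : t * s + a ≤ x1 + x2 := by
        have := le_of_lt hx1; linarith
      rw [hadef] at this; nlinarith
    have hprod : (G (Set.Ioi (t * s))).toReal * ((gaussianReal 0 1) (Set.Ici a)).toReal ≤ P := by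
      rw [hPdef]
      have h1 : (G.prod (gaussianReal 0 1)) ((Set.Ioi (t * s)) ×ˢ (Set.Ici a))
          ≤ (G.prod (gaussianReal 0 1)) {x : ℝ × ℝ | s ≤ x.1 + x.2} :=
        measure_mono hincl
      have h2 := ENNReal.toReal_le_toReal (measure_ne_top _ _) (measure_ne_top _ _) |>.mpr h1
      rwa [Measure.prod_prod, ENNReal.toReal_mul] at h2
    calc (1 / (6 * L)) * Real.exp (f t)
        = (G (Set.Ioi (t * s))).toReal * (Real.exp (-(a ^ 2) / 2) / (6 * L)) := by
          rw [hf]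
          simp only [Real.exp_sub]
          rw [Real.exp_log hGt, ha2, Real.exp_neg]
          field_simp
      _ ≤ (G (Set.Ioi (t * s))).toReal * ((gaussianReal 0 1) (Set.Ici a)).toReal := by
          exact mul_le_mul_of_nonneg_left hgauss hGt.le
      _ ≤ P := hprod
  have hP : 0 < P :=
    lt_of_lt_of_le (by positivity) (key 0 ⟨le_refl _, zero_le_one⟩)
  have hne : (f '' Set.Icc (0:ℝ) 1).Nonempty :=
    ⟨f 0, Set.mem_image_of_mem f ⟨le_refl _, zero_le_one⟩⟩
  have h6LP : 0 < 6 * L * P := by positivity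
  have hsup : sSup (f '' Set.Icc (0:ℝ) 1) ≤ Real.log (6 * L * P) := by
    apply csSup_le hne
    rintro y ⟨t, ht, rfl⟩
    rw [Real.le_log_iff_exp_le h6LP]
    have := key t ht
    rw [div_mul_eq_mul_div, one_mul, div_le_iff₀ (by positivity)] at this
    nlinarith
  calc (1 / (6 * L)) * Real.exp (sSup (f '' Set.Icc (0:ℝ) 1))
      ≤ (1 / (6 * L)) * Real.exp (Real.log (6 * L * P)) :=
        mul_le_mul_of_nonneg_left (Real.exp_le_exp.mpr hsup) hcpos.le
    _ = P := by rw [Real.exp_log h6LP]; field_simp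
end

section
/- Let ν > 0, β ∈ (1/2, 1), r > 0, and σ_n = r√(2 log n)/n^{(1−β)/ν}. Let G be a distribution with lim_{μ→∞} μ^ν (1 − G(μ)) = C > 0. Then n^{1−β} · P_{μ ~ G(·/σ_n), Z ~ N(0,1)}(μ + Z ≥ √(2δ log n)) → C (r/√δ)^ν for every fixed δ ∈ (1−β, 1]. -/
open MeasureTheory ProbabilityTheory Filter

lemma tendsto_sqrt_atTop' : Tendsto Real.sqrt atTop atTop := by
  have h := tendsto_rpow_atTop (y := (1/2:ℝ)) (by norm_num)
  refine h.congr' ?_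
  filter_upwards [eventually_ge_atTop (0:ℝ)] with x hx
  rw [Real.sqrt_eq_rpow]

set_option maxHeartbeats 1000000 in
lemma tail_Ici {ν C : ℝ} (G : Measure ℝ) [IsProbabilityMeasure G]
    (htail : Tendsto (fun μ : ℝ => μ ^ ν * (G (Set.Ioi μ)).toReal) atTop (nhds C)) :
    Tendsto (fun u : ℝ => u ^ ν * (G (Set.Ici u)).toReal) atTop (nhds C) := by
  have h2 : Tendsto (fun u : ℝ => (u - 1) ^ ν * (G (Set.Ioi (u - 1))).toReal) atTop (nhds C) :=
    htail.comp (tendsto_atTop_add_const_right atTop (-1) tendsto_id)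
  have h1 : Tendsto (fun u : ℝ => u / (u - 1)) atTop (nhds 1) := by
    have : Tendsto (fun u : ℝ => 1 + (u - 1)⁻¹) atTop (nhds (1 + 0)) :=
      tendsto_const_nhds.add (tendsto_atTop_add_const_right atTop (-1) tendsto_id).inv_tendsto_atTop
    refine (by simpa using this : Tendsto (fun u : ℝ => 1 + (u - 1)⁻¹) atTop (nhds 1)).congr' ?_
    filter_upwards [eventually_gt_atTop (1:ℝ)] with u hu
    have h0 : u - 1 ≠ 0 := by linarith
    field_simp
    ring
  have h1' : Tendsto (fun u : ℝ => (u / (u - 1)) ^ ν) atTop (nhds 1) := by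
    have := (Real.continuousAt_rpow_const 1 ν (Or.inl one_ne_zero)).tendsto.comp h1
    simpa [Function.comp_def] using this
  have hupper : Tendsto (fun u : ℝ => (u / (u - 1)) ^ ν *
      ((u - 1) ^ ν * (G (Set.Ioi (u - 1))).toReal)) atTop (nhds C) := by
    simpa using h1'.mul h2
  refine tendsto_of_tendsto_of_tendsto_of_le_of_le' htail hupper ?_ ?_
  · filter_upwards [eventually_ge_atTop (0:ℝ)] with u hu
    have : (G (Set.Ioi u)).toReal ≤ (G (Set.Ici u)).toReal :=
      ENNReal.toReal_mono (measure_ne_top _ _) (measure_mono Set.Ioi_subset_Ici_self)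
    exact mul_le_mul_of_nonneg_left this (Real.rpow_nonneg hu ν)
  · filter_upwards [eventually_gt_atTop (1:ℝ)] with u hu
    have hu0 : (0:ℝ) < u := by linarith
    have hu1 : (0:ℝ) < u - 1 := by linarith
    have hpow : (u / (u - 1)) ^ ν * (u - 1) ^ ν = u ^ ν := by
      have h := Real.mul_rpow (x := u / (u - 1)) (y := u - 1) (z := ν)
        (div_nonneg hu0.le hu1.le) hu1.le
      rw [div_mul_cancel₀ _ hu1.ne'] at h
      exact h.symm
    have hss : Set.Ici u ⊆ Set.Ioi (u - 1) := by
      intro x hx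
      simp only [Set.mem_Ici] at hx
      simp only [Set.mem_Ioi]
      linarith
    have hsub : (G (Set.Ici u)).toReal ≤ (G (Set.Ioi (u - 1))).toReal :=
      ENNReal.toReal_mono (measure_ne_top _ _) (measure_mono hss)
    calc u ^ ν * (G (Set.Ici u)).toReal
        ≤ u ^ ν * (G (Set.Ioi (u - 1))).toReal :=
          mul_le_mul_of_nonneg_left hsub (Real.rpow_nonneg hu0.le ν)
      _ = (u / (u - 1)) ^ ν * ((u - 1) ^ ν * (G (Set.Ioi (u - 1))).toReal) := by
          rw [← mul_assoc, hpow]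

set_option maxHeartbeats 2000000 in
/-- Polynomial-tail scaling: with `σ_n = r√(2 log n)/n^{(1-β)/ν}` and `G` having
polynomial tail `μ^ν (1 - G(μ)) → C > 0`, for each fixed `δ ∈ (1-β, 1]`,
`n^{1-β} · P_{μ ~ G(·/σ_n), Z ~ N(0,1)}(μ + Z ≥ √(2δ log n)) → C (r/√δ)^ν`. -/
theorem polytail_scaling (ν β r C : ℝ) (hν : 0 < ν) (hβ1 : 1/2 < β) (hβ2 : β < 1)
    (hr : 0 < r) (hC : 0 < C)
    (G : Measure ℝ) [IsProbabilityMeasure G]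
    (htail : Tendsto (fun μ : ℝ => μ ^ ν * (G (Set.Ioi μ)).toReal)
        atTop (nhds C))
    (σ : ℕ → ℝ)
    (hσ : ∀ n, σ n = r * Real.sqrt (2 * Real.log n) / (n : ℝ) ^ ((1 - β) / ν))
    (δ : ℝ) (hδ1 : 1 - β < δ) (hδ2 : δ ≤ 1) :
    Tendsto (fun n : ℕ => (n : ℝ) ^ ((1:ℝ) - β) *
        (((Measure.map (fun θ : ℝ => σ n * θ) G).prod (gaussianReal 0 1))
          {x : ℝ × ℝ | Real.sqrt (2 * δ * Real.log n) ≤ x.1 + x.2}).toReal)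
      atTop (nhds (C * (r / Real.sqrt δ) ^ ν)) := by
  have hβ0 : 0 < 1 - β := by linarith
  have hδ0 : 0 < δ := lt_trans hβ0 hδ1
  have hsδ : 0 < Real.sqrt δ := Real.sqrt_pos.mpr hδ0
  set p : ℝ := (1 - β) / ν with hp_def
  have hp : 0 < p := div_pos hβ0 hν
  set t : ℕ → ℝ := fun n => Real.sqrt (2 * δ * Real.log n) with ht_def
  set A : ℕ → ℝ := fun n => Real.sqrt δ / r * (n : ℝ) ^ p with hA_def
  set γ : Measure ℝ := gaussianReal 0 1 with hγ_def
  have ht_app : ∀ n : ℕ, t n = Real.sqrt (2 * δ * Real.log n) := fun _ => rfl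
  have hA_app : ∀ n : ℕ, A n = Real.sqrt δ / r * (n : ℝ) ^ p := fun _ => rfl
  -- basic positivity facts
  have hlog : ∀ n : ℕ, 2 ≤ n → 0 < Real.log n := fun n hn =>
    Real.log_pos (by exact_mod_cast Nat.lt_of_lt_of_le one_lt_two hn)
  have hnpos : ∀ n : ℕ, 1 ≤ n → (0:ℝ) < (n:ℝ) := fun n hn => by exact_mod_cast hn
  have hσpos : ∀ n : ℕ, 2 ≤ n → 0 < σ n := by
    intro n hn
    rw [hσ n]
    have h1 : 0 < Real.sqrt (2 * Real.log n) :=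
      Real.sqrt_pos.mpr (by linarith [hlog n hn])
    have h2 : (0:ℝ) < (n:ℝ) ^ p := Real.rpow_pos_of_pos (hnpos n (by omega)) p
    positivity
  have htpos : ∀ n : ℕ, 2 ≤ n → 0 < t n := by
    intro n hn
    exact Real.sqrt_pos.mpr (by nlinarith [hlog n hn])
  have hApos : ∀ n : ℕ, 1 ≤ n → 0 < A n := by
    intro n hn
    have h2 : (0:ℝ) < (n:ℝ) ^ p := Real.rpow_pos_of_pos (hnpos n hn) p
    have := div_pos hsδ hr
    positivity
  have hAt : ∀ n : ℕ, 2 ≤ n → σ n * A n = t n := by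
    intro n hn
    have h2 : (0:ℝ) < (n:ℝ) ^ p := Real.rpow_pos_of_pos (hnpos n (by omega)) p
    have ht' : t n = Real.sqrt δ * Real.sqrt (2 * Real.log n) := by
      rw [ht_app]
      rw [show 2 * δ * Real.log n = δ * (2 * Real.log n) by ring, Real.sqrt_mul hδ0.le]
    rw [hσ n, ht', hA_app]
    field_simp
  have hApow : ∀ n : ℕ, 1 ≤ n → A n ^ ν = (Real.sqrt δ / r) ^ ν * (n:ℝ) ^ ((1:ℝ) - β) := by
    intro n hn
    rw [hA_app]
    have h := Real.mul_rpow (x := Real.sqrt δ / r) (y := (n:ℝ) ^ p) (z := ν)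
      (div_nonneg hsδ.le hr.le) (Real.rpow_nonneg (hnpos n hn).le p)
    rw [h, ← Real.rpow_mul (hnpos n hn).le, hp_def, div_mul_cancel₀ _ hν.ne']
  have hA : Tendsto A atTop atTop := by
    refine Tendsto.const_mul_atTop (div_pos hsδ hr) ?_
    exact (tendsto_rpow_atTop hp).comp tendsto_natCast_atTop_atTop
  have ht_top : Tendsto t atTop atTop := by
    refine tendsto_sqrt_atTop'.comp ?_
    exact Tendsto.const_mul_atTop (by linarith) (Real.tendsto_log_atTop.comp tendsto_natCast_atTop_atTop)
  have hGmeas : Measurable (fun u : ℝ => G (Set.Ici u)) := by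
    have hanti : Antitone (fun u : ℝ => G (Set.Ici u)) := fun a b hab =>
      measure_mono (Set.Ici_subset_Ici.mpr hab)
    exact hanti.measurable
  have htail' := tail_Ici G htail
  have hGle : ∀ s : Set ℝ, (G s).toReal ≤ 1 := fun s =>
    ENNReal.toReal_mono ENNReal.one_ne_top prob_le_one
  -- the integrand
  set F : ℕ → ℝ → ℝ :=
    fun n z => (n:ℝ) ^ ((1:ℝ) - β) * (G (Set.Ici ((t n - z) / σ n))).toReal with hF_def
  have hF_app : ∀ (n : ℕ) (z : ℝ),
      F n z = (n:ℝ) ^ ((1:ℝ) - β) * (G (Set.Ici ((t n - z) / σ n))).toReal := fun _ _ => rfl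
  -- Step A : rewrite the probability as an integral
  have Heq : ∀ᶠ n : ℕ in atTop, (n:ℝ) ^ ((1:ℝ) - β) *
      (((Measure.map (fun θ : ℝ => σ n * θ) G).prod γ)
        {x : ℝ × ℝ | t n ≤ x.1 + x.2}).toReal = ∫ z, F n z ∂γ := by
    filter_upwards [eventually_ge_atTop 2] with n hn
    have hσn := hσpos n hn
    have hS : MeasurableSet {x : ℝ × ℝ | t n ≤ x.1 + x.2} :=
      measurableSet_le measurable_const (measurable_fst.add measurable_snd)
    have h1 : ((Measure.map (fun θ : ℝ => σ n * θ) G).prod γ) {x : ℝ × ℝ | t n ≤ x.1 + x.2}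
        = ∫⁻ z, G (Set.Ici ((t n - z) / σ n)) ∂γ := by
      rw [Measure.prod_apply_symm hS]
      refine lintegral_congr fun z => ?_
      have hpre : (fun x : ℝ => (x, z)) ⁻¹' {x : ℝ × ℝ | t n ≤ x.1 + x.2}
          = Set.Ici (t n - z) := by
        ext x
        simp only [Set.mem_preimage, Set.mem_setOf_eq, Set.mem_Ici]
        constructor <;> intro h <;> linarith
      rw [hpre, Measure.map_apply
        (show Measurable fun θ : ℝ => σ n * θ from measurable_id.const_mul (σ n))
        measurableSet_Ici]
      congr 1
      ext θ
      simp only [Set.mem_preimage, Set.mem_Ici]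
      constructor
      · intro h
        rw [div_le_iff₀ hσn]
        linarith [mul_comm (σ n) θ]
      · intro h
        have := (div_le_iff₀ hσn).mp h
        linarith [mul_comm (σ n) θ]
    have hmeas2 : Measurable (fun z : ℝ => G (Set.Ici ((t n - z) / σ n))) :=
      hGmeas.comp ((measurable_const.sub measurable_id).div_const _)
    rw [h1, ← integral_toReal hmeas2.aemeasurable (ae_of_all _ fun z => measure_lt_top G _),
      ← integral_const_mul]
  -- Step B : dominated convergence
  -- choice of parameters for the dominating function
  set q : ℝ := ((1 - β) / δ + 1) / 2 with hq_def
  have hbd : (1 - β) / δ < 1 := (div_lt_one hδ0).mpr hδ1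
  have hbd0 : 0 < (1 - β) / δ := div_pos hβ0 hδ0
  have hq0 : 0 < q := by rw [hq_def]; linarith
  have hq1 : q < 1 := by rw [hq_def]; linarith
  have hq2 : (1 - β) / δ < q := by rw [hq_def]; linarith
  set ε : ℝ := Real.sqrt q with hε_def
  have hε0 : 0 < ε := Real.sqrt_pos.mpr hq0
  have hε1 : ε < 1 := by
    rw [hε_def, show (1:ℝ) = Real.sqrt 1 by simp]
    exact Real.sqrt_lt_sqrt hq0.le hq1
  have hε2 : ε ^ 2 = q := Real.sq_sqrt hq0.le
  set c : ℝ := (1 - β) / (2 * δ * q) with hc_def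
  have hc0 : 0 < c := div_pos hβ0 (by positivity)
  have hc2 : c < 1/2 := by
    rw [hc_def, div_lt_iff₀ (by positivity)]
    have : 1 - β < δ * q := by
      have := (div_lt_iff₀ hδ0).mp hq2
      linarith
    linarith
  -- tail bound for G
  have hCb : ∀ᶠ u in atTop, u ^ ν * (G (Set.Ici u)).toReal ≤ C + 1 :=
    htail'.eventually (eventually_le_nhds (by linarith))
  obtain ⟨U₀, hU₀⟩ := eventually_atTop.mp hCb
  set U : ℝ := max U₀ 1 with hU_def
  have hU1 : (1:ℝ) ≤ U := le_max_right _ _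
  set M : ℝ := (C + 1) / ((1 - ε) ^ ν * (Real.sqrt δ / r) ^ ν) with hM_def
  have h1ε : 0 < 1 - ε := by linarith
  have hM0 : 0 < M := by
    rw [hM_def]
    have h1 : (0:ℝ) < (1 - ε) ^ ν := Real.rpow_pos_of_pos h1ε ν
    have h2 : (0:ℝ) < (Real.sqrt δ / r) ^ ν := Real.rpow_pos_of_pos (div_pos hsδ hr) ν
    positivity
  have hAU : ∀ᶠ n : ℕ in atTop, U ≤ (1 - ε) * A n :=
    (Tendsto.const_mul_atTop h1ε hA).eventually_ge_atTop U
  have hbound : ∀ᶠ n : ℕ in atTop, ∀ᵐ z ∂γ, ‖F n z‖ ≤ M + Real.exp (c * z ^ 2) := by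
    filter_upwards [eventually_ge_atTop 2, hAU] with n hn hAUn
    refine ae_of_all _ fun z => ?_
    have hσn := hσpos n hn
    have htn := htpos n hn
    have hnb : (0:ℝ) < (n:ℝ) ^ ((1:ℝ) - β) := Real.rpow_pos_of_pos (hnpos n (by omega)) _
    have hFnn : 0 ≤ F n z := by
      rw [hF_app]
      positivity
    rw [Real.norm_eq_abs, abs_of_nonneg hFnn]
    rcases le_or_gt z (ε * t n) with hz | hz
    · -- main region : polynomial tail bound
      set u : ℝ := (t n - z) / σ n with hu_def
      have hu_ge : (1 - ε) * A n ≤ u := by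
        have h1 : (1 - ε) * t n ≤ t n - z := by nlinarith
        have h2 : (1 - ε) * t n / σ n = (1 - ε) * A n := by
          rw [← hAt n hn]
          field_simp
        rw [hu_def, ← h2]
        gcongr
      have huU : U ≤ u := le_trans hAUn hu_ge
      have hu0 : 0 < u := lt_of_lt_of_le (by linarith) huU
      have htb := hU₀ u (le_trans (le_max_left _ _) huU)
      have hupow : (0:ℝ) < u ^ ν := Real.rpow_pos_of_pos hu0 ν
      have hG_le : (G (Set.Ici u)).toReal ≤ (C + 1) / u ^ ν := by
        rw [le_div_iff₀ hupow]
        linarith [mul_comm (u ^ ν) ((G (Set.Ici u)).toReal)]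
      have hwpow : (0:ℝ) < ((1 - ε) * A n) ^ ν :=
        Real.rpow_pos_of_pos (by positivity) ν
      have hmono : ((1 - ε) * A n) ^ ν ≤ u ^ ν :=
        Real.rpow_le_rpow (by positivity) hu_ge hν.le
      have step1 : F n z ≤ (n:ℝ) ^ ((1:ℝ) - β) * ((C + 1) / ((1 - ε) * A n) ^ ν) := by
        rw [hF_app]
        refine mul_le_mul_of_nonneg_left (le_trans hG_le ?_) hnb.le
        exact div_le_div_of_nonneg_left (by linarith) hwpow hmono
      have step2 : (n:ℝ) ^ ((1:ℝ) - β) * ((C + 1) / ((1 - ε) * A n) ^ ν) = M := by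
        have hmr := Real.mul_rpow (x := 1 - ε) (y := A n) (z := ν) h1ε.le
          (hApos n (by omega)).le
        rw [hmr, hApow n (by omega), hM_def]
        have h1 : ((1:ℝ) - ε) ^ ν ≠ 0 := (Real.rpow_pos_of_pos h1ε ν).ne'
        have h2 : (Real.sqrt δ / r) ^ ν ≠ 0 := (Real.rpow_pos_of_pos (div_pos hsδ hr) ν).ne'
        field_simp
      calc F n z ≤ M := step2 ▸ step1
        _ ≤ M + Real.exp (c * z ^ 2) := by linarith [Real.exp_pos (c * z ^ 2)]
    · -- large z region : crude bound
      have ha : 0 ≤ ε * t n := mul_nonneg hε0.le (htpos n hn).le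
      have hz0 : 0 < z := lt_of_le_of_lt ha hz
      have hsq : 2 * δ * q * Real.log n < z ^ 2 := by
        have h1 : (ε * t n) ^ 2 < z ^ 2 := by
          nlinarith [mul_pos (sub_pos.mpr hz) (add_pos_of_nonneg_of_pos ha hz0)]
        have h2 : t n ^ 2 = 2 * δ * Real.log n := by
          rw [ht_app]
          exact Real.sq_sqrt (by nlinarith [hlog n hn])
        nlinarith [hε2]
      have hkey : Real.log n * ((1:ℝ) - β) ≤ c * z ^ 2 := by
        have hc2' : c * (2 * δ * q) = 1 - β := by
          rw [hc_def]
          field_simp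
        calc Real.log n * ((1:ℝ) - β) = c * (2 * δ * q * Real.log n) := by
              rw [← hc2']; ring
          _ ≤ c * z ^ 2 := by nlinarith
      have hexp : (n:ℝ) ^ ((1:ℝ) - β) ≤ Real.exp (c * z ^ 2) := by
        rw [Real.rpow_def_of_pos (hnpos n (by omega))]
        exact Real.exp_le_exp.mpr hkey
      calc F n z ≤ (n:ℝ) ^ ((1:ℝ) - β) * 1 := by
            rw [hF_app]
            exact mul_le_mul_of_nonneg_left (hGle _) hnb.le
        _ = (n:ℝ) ^ ((1:ℝ) - β) := mul_one _
        _ ≤ Real.exp (c * z ^ 2) := hexp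
        _ ≤ M + Real.exp (c * z ^ 2) := by linarith
  -- integrability of the dominating function
  have hbint : Integrable (fun z : ℝ => M + Real.exp (c * z ^ 2)) γ := by
    refine (integrable_const M).add ?_
    rw [hγ_def, gaussianReal_of_var_ne_zero _ one_ne_zero]
    rw [integrable_withDensity_iff (measurable_gaussianPDF _ _)
      (ae_of_all _ fun x => ENNReal.ofReal_lt_top)]
    have heq : (fun x : ℝ => Real.exp (c * x ^ 2) * (gaussianPDF 0 1 x).toReal)
        = fun x : ℝ => (Real.sqrt (2 * Real.pi))⁻¹ * Real.exp (-(1/2 - c) * x ^ 2) := by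
      funext x
      rw [gaussianPDF_def, ENNReal.toReal_ofReal (gaussianPDFReal_nonneg _ _ _),
        gaussianPDFReal]
      push_cast
      rw [mul_one, mul_comm (Real.exp (c * x ^ 2)), mul_assoc, ← Real.exp_add]
      congr 2
      ring
    rw [heq]
    exact (integrable_exp_neg_mul_sq (by linarith)).const_mul _
  -- measurability of the integrands
  have hFmeas : ∀ n : ℕ, AEStronglyMeasurable (F n) γ := by
    intro n
    have : Measurable (F n) := by
      have : F n = fun z => (n:ℝ) ^ ((1:ℝ) - β) * (G (Set.Ici ((t n - z) / σ n))).toReal :=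
        funext fun z => hF_app n z
      rw [this]
      exact ((hGmeas.comp ((measurable_const.sub measurable_id).div_const _)).ennreal_toReal).const_mul _
    exact this.aestronglyMeasurable
  -- pointwise limit
  have hlim : ∀ z : ℝ, Tendsto (fun n => F n z) atTop (nhds (C * (r / Real.sqrt δ) ^ ν)) := by
    intro z
    have hzt : Tendsto (fun n : ℕ => z / t n) atTop (nhds 0) :=
      tendsto_const_nhds.div_atTop ht_top
    have h1mz : Tendsto (fun n : ℕ => 1 - z / t n) atTop (nhds 1) := by
      have := tendsto_const_nhds.sub hzt (f := fun _ : ℕ => (1:ℝ)) (l := atTop)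
      simpa using this
    have hupos : ∀ᶠ n : ℕ in atTop, 0 < 1 - z / t n :=
      h1mz.eventually (eventually_gt_nhds one_pos)
    have hu_eq : ∀ᶠ n : ℕ in atTop, (t n - z) / σ n = (1 - z / t n) * A n := by
      filter_upwards [eventually_ge_atTop 2] with n hn
      have hσn := (hσpos n hn).ne'
      have hAn := (hApos n (by omega)).ne'
      rw [← hAt n hn]
      field_simp
    have hu : Tendsto (fun n : ℕ => (t n - z) / σ n) atTop atTop := by
      refine Tendsto.congr' (EventuallyEq.symm hu_eq) ?_
      exact Tendsto.pos_mul_atTop one_pos h1mz hA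
    have htailz : Tendsto (fun n : ℕ =>
        ((t n - z) / σ n) ^ ν * (G (Set.Ici ((t n - z) / σ n))).toReal) atTop (nhds C) :=
      htail'.comp hu
    have hpow1 : Tendsto (fun n : ℕ => (1 - z / t n) ^ ν) atTop (nhds 1) := by
      have := (Real.continuousAt_rpow_const 1 ν (Or.inl one_ne_zero)).tendsto.comp h1mz
      simpa [Function.comp_def] using this
    have hratio : Tendsto (fun n : ℕ => (n:ℝ) ^ ((1:ℝ) - β) / ((t n - z) / σ n) ^ ν)
        atTop (nhds ((r / Real.sqrt δ) ^ ν)) := by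
      have hbase : Tendsto (fun n : ℕ => (r / Real.sqrt δ) ^ ν / (1 - z / t n) ^ ν)
          atTop (nhds ((r / Real.sqrt δ) ^ ν / 1)) :=
        tendsto_const_nhds.div hpow1 one_ne_zero
      rw [div_one] at hbase
      refine Tendsto.congr' ?_ hbase
      filter_upwards [eventually_ge_atTop 2, hupos, hu_eq] with n hn h1z huen
      have hAn := hApos n (by omega)
      rw [huen, Real.mul_rpow h1z.le hAn.le, hApow n (by omega)]
      have hw : (0:ℝ) < (1 - z / t n) ^ ν := Real.rpow_pos_of_pos h1z ν
      have hnb : (0:ℝ) < (n:ℝ) ^ ((1:ℝ) - β) := Real.rpow_pos_of_pos (hnpos n (by omega)) _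
      have hdr : (0:ℝ) < (Real.sqrt δ / r) ^ ν := Real.rpow_pos_of_pos (div_pos hsδ hr) ν
      have hinv : (Real.sqrt δ / r) ^ ν * (r / Real.sqrt δ) ^ ν = 1 := by
        have hh : Real.sqrt δ / r * (r / Real.sqrt δ) = 1 := by
          field_simp
        rw [← Real.mul_rpow (div_nonneg hsδ.le hr.le) (div_nonneg hr.le hsδ.le), hh,
          Real.one_rpow]
      have hd2 : (0:ℝ) < (1 - z / t n) ^ ν * ((Real.sqrt δ / r) ^ ν * (n:ℝ) ^ ((1:ℝ) - β)) :=
        mul_pos hw (mul_pos hdr hnb)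
      rw [div_eq_div_iff hw.ne' hd2.ne']
      linear_combination ((n:ℝ) ^ ((1:ℝ) - β) * (1 - z / t n) ^ ν) * hinv
    have hcomb := hratio.mul htailz
    rw [show C * (r / Real.sqrt δ) ^ ν = (r / Real.sqrt δ) ^ ν * C from mul_comm _ _]
    refine Tendsto.congr' ?_ hcomb
    filter_upwards [hu.eventually_gt_atTop 0] with n hun
    have hne : ((t n - z) / σ n) ^ ν ≠ 0 := (Real.rpow_pos_of_pos hun ν).ne'
    rw [hF_app]
    field_simp
  -- assemble via dominated convergence
  have hmain : Tendsto (fun n : ℕ => ∫ z, F n z ∂γ) atTop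
      (nhds (∫ _ : ℝ, C * (r / Real.sqrt δ) ^ ν ∂γ)) := by
    refine tendsto_integral_filter_of_dominated_convergence _
      (Eventually.of_forall hFmeas) hbound hbint (ae_of_all _ hlim)
  have hconst : (∫ _ : ℝ, C * (r / Real.sqrt δ) ^ ν ∂γ) = C * (r / Real.sqrt δ) ^ ν := by
    rw [integral_const]
    simp [hγ_def]
  rw [hconst] at hmain
  exact Tendsto.congr' (EventuallyEq.symm Heq) hmain
end
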